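/- arXiv:2212.01171 — 3 statements merged into one kernel-verified Lean document; each statement's English description precedes it below -/
import Mathlib

section
/- Under the hypotheses of the previous statement (existence of a nonempty closed irreducible component U on which every propensity is somewhere positive), the stoichiometric matrix T whose columns are the jump vectors ζ_1, …, ζ_r admits a strictly positive vector in its kernel: there exists x ∈ ℝ_{>0}^r with Tx = 0. -/
lemma chain_counts {d r : ℕ} (ζ : Fin r → Fin d → ℤ)
    (lam : Fin r → (Fin d → ℤ) → ℝ) {m n : Fin d → ℤ}
    (h : Relation.ReflTransGen (fun x y => ∃ k, 0 < lam k x ∧ y = x + ζ k) m n) :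
    ∃ c : Fin r → ℕ, ∀ i, n i = m i + ∑ j, (c j : ℤ) * ζ j i := by
  induction h with
  | refl => exact ⟨0, fun i => by simp⟩
  | tail _ step ih =>
    obtain ⟨c, hc⟩ := ih
    obtain ⟨k, _, rfl⟩ := step
    refine ⟨fun j => c j + if j = k then 1 else 0, fun i => ?_⟩
    have : ∀ j : Fin r, ((c j + if j = k then 1 else 0 : ℕ) : ℤ) * ζ j i
        = (c j : ℤ) * ζ j i + (if j = k then ζ j i else 0) := by
      intro j; split <;> push_cast <;> ring
    simp only [this, Finset.sum_add_distrib, Pi.add_apply]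
    rw [Finset.sum_ite_eq' Finset.univ k (fun j => ζ j i)]
    simp [hc i]; ring

/-- Under the hypotheses of Statement 7 (nonempty closed irreducible component `U`
on which every propensity is somewhere positive), the stoichiometric matrix with
columns `ζ k` admits a strictly positive real kernel vector. -/
theorem stmt_8 (d r : ℕ) (ζ : Fin r → Fin d → ℤ)
    (lam : Fin r → (Fin d → ℤ) → ℝ)
    (U : Set (Fin d → ℤ)) (hUnn : ∀ n ∈ U, 0 ≤ n) (hUne : U.Nonempty)
    (hclosed : ∀ n ∈ U, ∀ k, 0 < lam k n → n + ζ k ∈ U)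
    (hirr : ∀ m ∈ U, ∀ n ∈ U,
      Relation.ReflTransGen (fun x y => ∃ k, 0 < lam k x ∧ y = x + ζ k) m n)
    (hpos : ∀ k, ∃ n ∈ U, 0 < lam k n) :
    ∃ x : Fin r → ℝ, (∀ k, 0 < x k) ∧ ∀ i, ∑ k, x k * (ζ k i : ℝ) = 0 := by
  -- For each k, find counts a k : Fin r → ℕ with ζ k i + ∑ j a k j * ζ j i = 0
  have key : ∀ k : Fin r, ∃ a : Fin r → ℕ, ∀ i, (ζ k i : ℤ) + ∑ j, (a j : ℤ) * ζ j i = 0 := by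
    intro k
    obtain ⟨n, hnU, hlam⟩ := hpos k
    have hmem : n + ζ k ∈ U := hclosed n hnU k hlam
    obtain ⟨c, hc⟩ := chain_counts ζ lam (hirr (n + ζ k) hmem n hnU)
    exact ⟨c, fun i => by have := hc i; simp only [Pi.add_apply] at this; linarith⟩
  choose a ha using key
  refine ⟨fun k => 1 + ∑ j, (a j k : ℝ), fun k => by positivity, fun i => ?_⟩
  have expand : ∑ k, (1 + ∑ j, (a j k : ℝ)) * (ζ k i : ℝ)
      = ∑ k, (ζ k i : ℝ) + ∑ j, ∑ k, (a j k : ℝ) * (ζ k i : ℝ) := by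
    simp only [add_mul, one_mul, Finset.sum_mul]
    rw [Finset.sum_add_distrib, Finset.sum_comm]
  rw [expand]
  have : ∀ j : Fin r, ∑ k, (a j k : ℝ) * (ζ k i : ℝ) = -(ζ j i : ℝ) := by
    intro j
    have := ha j i
    have := congrArg (fun z : ℤ => (z : ℝ)) this
    push_cast at this
    linarith
  simp only [this]
  simp
end

section
/- Consider a continuous-time Markov chain on ℤ_{≥0}^d arising from a mass-action reaction network: reaction k has source complex ν_k, jump vector ζ_k = ν'_k − ν_k, and propensity λ_k(n) = κ_k · n!/(n − ν_k)! · 1_{n ≥ ν_k} with κ_k > 0. Suppose c ∈ ℝ_{>0}^d is a complex balanced equilibrium: for every complex ν, Σ_{k : ν'_k = ν} κ_k c^{ν_k} = Σ_{k : ν_k = ν} κ_k c^{ν_k}. Then the product-form Poisson measure π(n) = Π_{i=1}^d c_i^{n_i} / n_i! satisfies, for every state n ∈ ℤ_{≥0}^d, the stationarity equation Σ_k λ_k(n − ζ_k) π(n − ζ_k) = Σ_k λ_k(n) π(n). -/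
open Classical in
open Finset in
/-- Stochastic deficiency zero theorem (Anderson–Craciun–Kurtz): if `c` is a complex
balanced equilibrium of the deterministic mass-action system, then the product-form
Poisson measure `π(n) = ∏ i, c_i^{n_i}/n_i!` satisfies the stationarity equations of
the chemical master equation of the stochastic mass-action system. -/
theorem stmt_11 (d r : ℕ) (ν ν' : Fin r → Fin d → ℕ)
    (κ : Fin r → ℝ) (hκ : ∀ k, 0 < κ k)
    (c : Fin d → ℝ) (hc : ∀ i, 0 < c i)
    (hcb : ∀ v : Fin d → ℕ,
      ∑ k ∈ univ.filter (fun k => ν' k = v), κ k * ∏ i, c i ^ (ν k i) =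
      ∑ k ∈ univ.filter (fun k => ν k = v), κ k * ∏ i, c i ^ (ν k i))
    (lam : Fin r → (Fin d → ℤ) → ℝ)
    (hlam : ∀ k, ∀ n : Fin d → ℤ,
      lam k n = if (fun i => (ν k i : ℤ)) ≤ n
        then κ k * ∏ i, ((n i).toNat.descFactorial (ν k i) : ℝ) else 0)
    (π : (Fin d → ℤ) → ℝ)
    (hπ : ∀ n : Fin d → ℤ,
      π n = if 0 ≤ n then ∏ i, c i ^ (n i) / ((n i).toNat.factorial : ℝ) else 0)
    (ζ : Fin r → Fin d → ℤ) (hζ : ∀ k i, ζ k i = (ν' k i : ℤ) - (ν k i : ℤ)) :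
    ∀ n : Fin d → ℤ,
      ∑ k, lam k (n - ζ k) * π (n - ζ k) = ∑ k, lam k n * π n := by
  intro n
  -- Key identity: λ_k(m) π(m) = κ_k c^{ν_k} π(m - ν_k) for all m ∈ ℤ^d.
  have hkey : ∀ (k : Fin r) (m : Fin d → ℤ),
      lam k m * π m
        = (κ k * ∏ i, c i ^ (ν k i)) * π (m - fun i => (ν k i : ℤ)) := by
    intro k m
    by_cases h : (fun i => (ν k i : ℤ)) ≤ m
    · have hm0 : (0 : Fin d → ℤ) ≤ m := fun i => le_trans (Int.ofNat_nonneg _) (h i)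
      have hm0' : (0 : Fin d → ℤ) ≤ m - fun i => (ν k i : ℤ) := by
        intro i
        simpa using sub_nonneg.mpr (h i)
      rw [hlam, hπ, hπ, if_pos h, if_pos hm0, if_pos hm0']
      rw [mul_assoc, mul_assoc]
      congr 1
      rw [← Finset.prod_mul_distrib, ← Finset.prod_mul_distrib]
      apply Finset.prod_congr rfl
      intro i _
      have hi : (ν k i : ℤ) ≤ m i := h i
      have hmi : 0 ≤ m i := le_trans (Int.ofNat_nonneg _) hi
      obtain ⟨b, hb⟩ : ∃ b : ℕ, m i = (b : ℤ) :=
        ⟨(m i).toNat, (Int.toNat_of_nonneg hmi).symm⟩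
      have hab : ν k i ≤ b := by exact_mod_cast hb ▸ hi
      have hsub : m i - (ν k i : ℤ) = ((b - ν k i : ℕ) : ℤ) := by
        rw [hb]; push_cast [hab]; ring
      simp only [Pi.sub_apply, hb, hsub, Int.toNat_natCast, zpow_natCast]
      have hfac : ((b - ν k i).factorial : ℝ) * ((b.descFactorial (ν k i) : ℕ) : ℝ)
          = (b.factorial : ℝ) := by
        exact_mod_cast congrArg (Nat.cast (R := ℝ)) (Nat.factorial_mul_descFactorial hab)
      have hpow : c i ^ b = c i ^ (ν k i) * c i ^ (b - ν k i) := by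
        rw [← pow_add]; congr 1; omega
      have h1 : (b.factorial : ℝ) ≠ 0 := Nat.cast_ne_zero.mpr b.factorial_ne_zero
      have h2 : ((b - ν k i).factorial : ℝ) ≠ 0 :=
        Nat.cast_ne_zero.mpr (b - ν k i).factorial_ne_zero
      field_simp
      rw [show ((b : ℤ) - (ν k i : ℤ)) = ((b - ν k i : ℕ) : ℤ) by omega,
        zpow_natCast, hpow, ← hfac, Int.toNat_natCast]
      ring
    · rw [hlam, if_neg h, zero_mul]
      have hneg : ¬ (0 : Fin d → ℤ) ≤ m - fun i => (ν k i : ℤ) := by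
        intro h0
        apply h
        intro i
        have := h0 i
        simp only [Pi.sub_apply, Pi.zero_apply] at this
        show (ν k i : ℤ) ≤ m i
        omega
      rw [hπ, if_neg hneg, mul_zero]
  -- abbreviations
  set F : (Fin d → ℕ) → ℝ := fun v => π (n - fun i => (v i : ℤ)) with hF
  set S : Finset (Fin d → ℕ) := (univ.image ν) ∪ (univ.image ν') with hS
  have hfib : ∀ g : Fin r → Fin d → ℕ, (∀ k, g k ∈ S) →
      ∑ k, (κ k * ∏ i, c i ^ (ν k i)) * F (g k)
        = ∑ v ∈ S, (∑ k ∈ univ.filter (fun k => g k = v),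
            κ k * ∏ i, c i ^ (ν k i)) * F v := by
    intro g hg
    rw [← Finset.sum_fiberwise_of_maps_to (fun k _ => hg k)
      (fun k => (κ k * ∏ i, c i ^ (ν k i)) * F (g k))]
    apply Finset.sum_congr rfl
    intro v _
    rw [Finset.sum_mul]
    apply Finset.sum_congr rfl
    intro k hk
    rw [(Finset.mem_filter.mp hk).2]
  calc ∑ k, lam k (n - ζ k) * π (n - ζ k)
      = ∑ k, (κ k * ∏ i, c i ^ (ν k i)) * F (ν' k) := by
        apply Finset.sum_congr rfl
        intro k _
        rw [hkey]
        congr 2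
        funext i
        simp only [Pi.sub_apply, hζ k i]
        ring
    _ = ∑ v ∈ S, (∑ k ∈ univ.filter (fun k => ν' k = v),
          κ k * ∏ i, c i ^ (ν k i)) * F v :=
        hfib ν' (fun k => Finset.mem_union_right _
          (Finset.mem_image_of_mem _ (Finset.mem_univ k)))
    _ = ∑ v ∈ S, (∑ k ∈ univ.filter (fun k => ν k = v),
          κ k * ∏ i, c i ^ (ν k i)) * F v := by
        apply Finset.sum_congr rfl
        intro v _
        rw [hcb v]
    _ = ∑ k, (κ k * ∏ i, c i ^ (ν k i)) * F (ν k) :=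
        (hfib ν (fun k => Finset.mem_union_left _
          (Finset.mem_image_of_mem _ (Finset.mem_univ k)))).symm
    _ = ∑ k, lam k n * π n := by
        apply Finset.sum_congr rfl
        intro k _
        rw [hkey]
end

section
/- Consider the reaction network on species (A, B, C) with reactions and stochastic propensities: r1: C → 0 with λ1(n) = α1 n_C; r2: 0 → C with λ2(n) = α2; r3: 0 → A with λ3(n) = α3; r4: A → B with λ4(n) = α4 n_A + α5 n_A(n_A − 1); r5: B → C with λ5(n) = α6 n_B(n_B − 1); where all α_i > 0. Define θ(n) = n_B!(n_B − 1)! n_C! · Π_{j=1}^{n_A} [α4(n_A − j + 1) + α5(n_A − j + 1)(n_A − j)] / α5 for n = (n_A, n_B, n_C) with n_B ≥ 1, and let c = (α3/α5, α3/α6, (α2 + α3)/α1). Then the measure π(n) = c_A^{n_A} c_B^{n_B} c_C^{n_C} / θ(n) for n_B ≥ 1 and π(n) = 0 for n_B = 0 satisfies the stationarity equations of the chemical master equation for this chain. -/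
lemma stmt14_prodpos (α4 α5 : ℝ) (h4 : 0 < α4) (h5 : 0 < α5) (m : ℕ) :
    0 < ∏ j ∈ Finset.range m,
      (α4 * ((m : ℝ) - j) + α5 * ((m : ℝ) - j) * ((m : ℝ) - j - 1)) / α5 := by
  apply Finset.prod_pos
  intro j hj
  have hj' : (j : ℕ) + 1 ≤ m := Finset.mem_range.mp hj
  have h1 : (1 : ℝ) ≤ (m : ℝ) - j := by
    have := (Nat.cast_le (α := ℝ)).2 hj'
    push_cast at this; linarith
  apply div_pos _ h5
  nlinarith [mul_nonneg (mul_nonneg h5.le (by linarith : (0:ℝ) ≤ (m:ℝ) - j))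
      (by linarith : (0:ℝ) ≤ (m:ℝ) - j - 1)]

lemma stmt14_prodsucc (α4 α5 : ℝ) (m : ℕ) :
    (∏ j ∈ Finset.range (m + 1),
      (α4 * ((m : ℝ) + 1 - j) + α5 * ((m : ℝ) + 1 - j) * ((m : ℝ) + 1 - j - 1)) / α5)
    = (∏ j ∈ Finset.range m,
      (α4 * ((m : ℝ) - j) + α5 * ((m : ℝ) - j) * ((m : ℝ) - j - 1)) / α5)
      * ((α4 * ((m : ℝ) + 1) + α5 * ((m : ℝ) + 1) * (m : ℝ)) / α5) := by
  rw [Finset.prod_range_succ']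
  congr 1
  · exact Finset.prod_congr rfl fun j _ => by push_cast; ring
  · push_cast; ring

set_option maxHeartbeats 2000000 in
open Classical in
/-- For the translated network `C ⇌ 0 → A → B → C` with propensities
`λ1 = α1 n_C`, `λ2 = α2`, `λ3 = α3`, `λ4 = α4 n_A + α5 n_A (n_A - 1)`,
`λ5 = α6 n_B (n_B - 1)`, the measure `π(n) = c_A^{n_A} c_B^{n_B} c_C^{n_C} / θ(n)`
for `n_B ≥ 1` (and `0` otherwise), with
`θ(n) = n_B! (n_B-1)! n_C! ∏_{j=1}^{n_A} (α4 (n_A-j+1) + α5 (n_A-j+1)(n_A-j))/α5`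
and `c = (α3/α5, α3/α6, (α2+α3)/α1)`, satisfies the stationarity equations of the
chemical master equation. -/
theorem stmt_14 (α1 α2 α3 α4 α5 α6 : ℝ)
    (h1 : 0 < α1) (h2 : 0 < α2) (h3 : 0 < α3)
    (h4 : 0 < α4) (h5 : 0 < α5) (h6 : 0 < α6)
    (θ : ℤ → ℤ → ℤ → ℝ)
    (hθ : ∀ nA nB nC : ℤ, θ nA nB nC =
      (nB.toNat.factorial : ℝ) * ((nB - 1).toNat.factorial : ℝ) *
        (nC.toNat.factorial : ℝ) *
        ∏ j ∈ Finset.range nA.toNat,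
          (α4 * ((nA : ℝ) - j) + α5 * ((nA : ℝ) - j) * ((nA : ℝ) - j - 1)) / α5)
    (cA cB cC : ℝ)
    (hcA : cA = α3 / α5) (hcB : cB = α3 / α6) (hcC : cC = (α2 + α3) / α1)
    (π : ℤ → ℤ → ℤ → ℝ)
    (hπ : ∀ nA nB nC : ℤ, π nA nB nC =
      if 0 ≤ nA ∧ 1 ≤ nB ∧ 0 ≤ nC then cA ^ nA * cB ^ nB * cC ^ nC / θ nA nB nC else 0)
    (lam1 lam2 lam3 lam4 lam5 : ℤ → ℤ → ℤ → ℝ)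
    (hlam1 : ∀ nA nB nC : ℤ, lam1 nA nB nC = α1 * (nC : ℝ))
    (hlam2 : ∀ nA nB nC : ℤ, lam2 nA nB nC = α2)
    (hlam3 : ∀ nA nB nC : ℤ, lam3 nA nB nC = α3)
    (hlam4 : ∀ nA nB nC : ℤ, lam4 nA nB nC =
      α4 * (nA : ℝ) + α5 * (nA : ℝ) * ((nA : ℝ) - 1))
    (hlam5 : ∀ nA nB nC : ℤ, lam5 nA nB nC = α6 * (nB : ℝ) * ((nB : ℝ) - 1)) :
    ∀ nA nB nC : ℤ,
      lam1 nA nB (nC + 1) * π nA nB (nC + 1)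
        + lam2 nA nB (nC - 1) * π nA nB (nC - 1)
        + lam3 (nA - 1) nB nC * π (nA - 1) nB nC
        + lam4 (nA + 1) (nB - 1) nC * π (nA + 1) (nB - 1) nC
        + lam5 nA (nB + 1) (nC - 1) * π nA (nB + 1) (nC - 1)
      = (lam1 nA nB nC + lam2 nA nB nC + lam3 nA nB nC
          + lam4 nA nB nC + lam5 nA nB nC) * π nA nB nC := by
  subst hcA hcB hcC
  intro nA nB nC
  by_cases hmain : 0 ≤ nA ∧ 1 ≤ nB ∧ 0 ≤ nC
  · obtain ⟨hA, hB, hC⟩ := hmain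
    obtain ⟨a, rfl⟩ := Int.eq_ofNat_of_zero_le hA
    obtain ⟨c, rfl⟩ := Int.eq_ofNat_of_zero_le hC
    obtain ⟨b, hb⟩ := Int.eq_ofNat_of_zero_le (by omega : (0:ℤ) ≤ nB - 1)
    have hbb : nB = (b : ℤ) + 1 := by omega
    subst hbb
    have hα23 : (0:ℝ) < α2 + α3 := by linarith
    have hfb : ((Nat.factorial b : ℝ)) ≠ 0 := by
      exact_mod_cast (Nat.factorial_pos b).ne'
    have hT1 : lam1 (a:ℤ) ((b:ℤ)+1) ((c:ℤ)+1) * π (a:ℤ) ((b:ℤ)+1) ((c:ℤ)+1)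
        = (α2 + α3) * π (a:ℤ) ((b:ℤ)+1) (c:ℤ) := by
      rw [show ((b:ℤ)+1) = ((b+1:ℕ):ℤ) from by push_cast; ring,
          show ((c:ℤ)+1) = ((c+1:ℕ):ℤ) from by push_cast; ring,
          hlam1, hπ, hπ, if_pos (by omega), if_pos (by omega), hθ, hθ]
      have e1 : (((b+1:ℕ):ℤ) - 1).toNat = b := by omega
      have hfc : ((Nat.factorial c : ℝ)) ≠ 0 := by
        exact_mod_cast (Nat.factorial_pos c).ne'
      have hP := stmt14_prodpos α4 α5 h4 h5 a
      simp only [e1, Int.toNat_natCast, zpow_natCast, Nat.factorial_succ]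
      push_cast
      generalize hPP : (∏ j ∈ Finset.range a,
          (α4 * ((a:ℝ) - (j:ℝ)) + α5 * ((a:ℝ) - (j:ℝ)) * ((a:ℝ) - (j:ℝ) - 1)) / α5) = P at hP ⊢
      have hb1 : ((b:ℝ)+1) ≠ 0 := by positivity
      have hc1 : ((c:ℝ)+1) ≠ 0 := by positivity
      field_simp
      linear_combination (α2+α3)*(α2*α1⁻¹+α3*α1⁻¹)^c * (mul_inv_cancel₀ h1.ne')
    have hT2 : lam2 (a:ℤ) ((b:ℤ)+1) ((c:ℤ)-1) * π (a:ℤ) ((b:ℤ)+1) ((c:ℤ)-1)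
        = α2 * (α1 * (c:ℝ) / (α2 + α3)) * π (a:ℤ) ((b:ℤ)+1) (c:ℤ) := by
      rcases c with _ | c
      · rw [hπ, if_neg (by omega)]
        push_cast
        ring
      · rw [show (((c+1:ℕ)):ℤ) - 1 = ((c:ℕ):ℤ) from by push_cast; ring,
            show ((b:ℤ)+1) = ((b+1:ℕ):ℤ) from by push_cast; ring,
            hlam2, hπ, hπ, if_pos (by omega), if_pos (by omega), hθ, hθ]
        have e1 : (((b+1:ℕ):ℤ) - 1).toNat = b := by omega
        have hfc : ((Nat.factorial c : ℝ)) ≠ 0 := by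
          exact_mod_cast (Nat.factorial_pos c).ne'
        have hP := stmt14_prodpos α4 α5 h4 h5 a
        simp only [e1, Int.toNat_natCast, zpow_natCast, Nat.factorial_succ]
        push_cast
        generalize hPP : (∏ j ∈ Finset.range a,
            (α4 * ((a:ℝ) - (j:ℝ)) + α5 * ((a:ℝ) - (j:ℝ)) * ((a:ℝ) - (j:ℝ) - 1)) / α5) = P at hP ⊢
        have hb1 : ((b:ℝ)+1) ≠ 0 := by positivity
        have hc1 : ((c:ℝ)+1) ≠ 0 := by positivity
        simp only [div_pow]
        field_simp
        ring
    have hT3 : lam3 ((a:ℤ)-1) ((b:ℤ)+1) (c:ℤ) * π ((a:ℤ)-1) ((b:ℤ)+1) (c:ℤ)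
        = lam4 (a:ℤ) ((b:ℤ)+1) (c:ℤ) * π (a:ℤ) ((b:ℤ)+1) (c:ℤ) := by
      rcases a with _ | a
      · rw [hπ, if_neg (by omega), hlam4]
        push_cast
        ring
      · rw [show (((a+1:ℕ)):ℤ) - 1 = ((a:ℕ):ℤ) from by push_cast; ring,
            show ((b:ℤ)+1) = ((b+1:ℕ):ℤ) from by push_cast; ring,
            hlam3, hlam4, hπ, hπ, if_pos (by omega), if_pos (by omega), hθ, hθ]
        have e1 : (((b+1:ℕ):ℤ) - 1).toNat = b := by omega
        have hfc : ((Nat.factorial c : ℝ)) ≠ 0 := by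
          exact_mod_cast (Nat.factorial_pos c).ne'
        have hP := stmt14_prodpos α4 α5 h4 h5 a
        have hg : (0:ℝ) < α4 * ((a:ℝ)+1) + α5 * ((a:ℝ)+1) * (a:ℝ) := by positivity
        simp only [e1, Int.toNat_natCast, zpow_natCast, Nat.factorial_succ]
        push_cast
        rw [stmt14_prodsucc α4 α5 a]
        generalize hPP : (∏ j ∈ Finset.range a,
            (α4 * ((a:ℝ) - (j:ℝ)) + α5 * ((a:ℝ) - (j:ℝ)) * ((a:ℝ) - (j:ℝ) - 1)) / α5) = P at hP ⊢
        have hb1 : ((b:ℝ)+1) ≠ 0 := by positivity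
        simp only [div_pow]
        field_simp
        ring
    have hT4 : lam4 ((a:ℤ)+1) ((b:ℤ)+1-1) (c:ℤ) * π ((a:ℤ)+1) ((b:ℤ)+1-1) (c:ℤ)
        = lam5 (a:ℤ) ((b:ℤ)+1) (c:ℤ) * π (a:ℤ) ((b:ℤ)+1) (c:ℤ) := by
      rcases b with _ | b
      · rw [hπ, if_neg (by omega), hlam5]
        push_cast
        ring
      · rw [show (((b+1:ℕ)):ℤ) + 1 - 1 = ((b+1:ℕ):ℤ) from by ring,
            show (((b+1:ℕ)):ℤ) + 1 = ((b+2:ℕ):ℤ) from by push_cast; ring,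
            show ((a:ℕ):ℤ) + 1 = ((a+1:ℕ):ℤ) from by push_cast; ring,
            hlam4, hlam5, hπ, hπ, if_pos (by omega), if_pos (by omega), hθ, hθ]
        have e1 : (((b+1:ℕ):ℤ) - 1).toNat = b := by omega
        have e2 : (((b+2:ℕ):ℤ) - 1).toNat = b + 1 := by omega
        have hfc : ((Nat.factorial c : ℝ)) ≠ 0 := by
          exact_mod_cast (Nat.factorial_pos c).ne'
        have hP := stmt14_prodpos α4 α5 h4 h5 a
        have hg : (0:ℝ) < α4 * ((a:ℝ)+1) + α5 * ((a:ℝ)+1) * (a:ℝ) := by positivity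
        simp only [e1, e2, Int.toNat_natCast, zpow_natCast, Nat.factorial_succ]
        push_cast
        rw [stmt14_prodsucc α4 α5 a]
        generalize hPP : (∏ j ∈ Finset.range a,
            (α4 * ((a:ℝ) - (j:ℝ)) + α5 * ((a:ℝ) - (j:ℝ)) * ((a:ℝ) - (j:ℝ) - 1)) / α5) = P at hP ⊢
        have hb1 : ((b:ℝ)+1) ≠ 0 := by positivity
        have hb2 : ((b:ℝ)+2) ≠ 0 := by positivity
        simp only [div_pow]
        field_simp
        ring
    have hT5 : lam5 (a:ℤ) ((b:ℤ)+1+1) ((c:ℤ)-1) * π (a:ℤ) ((b:ℤ)+1+1) ((c:ℤ)-1)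
        = α3 * (α1 * (c:ℝ) / (α2 + α3)) * π (a:ℤ) ((b:ℤ)+1) (c:ℤ) := by
      rcases c with _ | c
      · rw [hπ, if_neg (by omega)]
        push_cast
        ring
      · rw [show (((c+1:ℕ)):ℤ) - 1 = ((c:ℕ):ℤ) from by push_cast; ring,
            show ((b:ℤ)+1+1) = ((b+2:ℕ):ℤ) from by push_cast; ring,
            show ((b:ℤ)+1) = ((b+1:ℕ):ℤ) from by push_cast; ring,
            hlam5, hπ, hπ, if_pos (by omega), if_pos (by omega), hθ, hθ]
        have e1 : (((b+1:ℕ):ℤ) - 1).toNat = b := by omega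
        have e2 : (((b+2:ℕ):ℤ) - 1).toNat = b + 1 := by omega
        have hfc : ((Nat.factorial c : ℝ)) ≠ 0 := by
          exact_mod_cast (Nat.factorial_pos c).ne'
        have hP := stmt14_prodpos α4 α5 h4 h5 a
        simp only [e1, e2, Int.toNat_natCast, zpow_natCast, Nat.factorial_succ]
        push_cast
        generalize hPP : (∏ j ∈ Finset.range a,
            (α4 * ((a:ℝ) - (j:ℝ)) + α5 * ((a:ℝ) - (j:ℝ)) * ((a:ℝ) - (j:ℝ) - 1)) / α5) = P at hP ⊢
        have hb1 : ((b:ℝ)+1) ≠ 0 := by positivity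
        have hb2 : ((b:ℝ)+2) ≠ 0 := by positivity
        have hc1 : ((c:ℝ)+1) ≠ 0 := by positivity
        simp only [div_pow]
        field_simp
        ring
    rw [hT1, hT2, hT3, hT4, hT5, hlam1, hlam2, hlam3]
    push_cast
    field_simp
    ring
  · have hz : π nA nB nC = 0 := by rw [hπ, if_neg hmain]
    rcases lt_or_ge nA 0 with hA | hA
    · have z1 : π nA nB (nC+1) = 0 := by rw [hπ, if_neg (by omega)]
      have z2 : π nA nB (nC-1) = 0 := by rw [hπ, if_neg (by omega)]
      have z3 : π (nA-1) nB nC = 0 := by rw [hπ, if_neg (by omega)]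
      have z5 : π nA (nB+1) (nC-1) = 0 := by rw [hπ, if_neg (by omega)]
      have h4' : lam4 (nA+1) (nB-1) nC * π (nA+1) (nB-1) nC = 0 := by
        rcases lt_or_ge (nA+1) 0 with h | h
        · rw [hπ, if_neg (by omega), mul_zero]
        · have hA1 : nA + 1 = 0 := by omega
          rw [hlam4, hA1]
          push_cast
          ring
      rw [z1, z2, z3, z5, hz, h4']
      ring
    · rcases lt_or_ge nB 1 with hB | hB
      · have z1 : π nA nB (nC+1) = 0 := by rw [hπ, if_neg (by omega)]
        have z2 : π nA nB (nC-1) = 0 := by rw [hπ, if_neg (by omega)]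
        have z3 : π (nA-1) nB nC = 0 := by rw [hπ, if_neg (by omega)]
        have z4 : π (nA+1) (nB-1) nC = 0 := by rw [hπ, if_neg (by omega)]
        have h5' : lam5 nA (nB+1) (nC-1) * π nA (nB+1) (nC-1) = 0 := by
          rcases lt_or_ge (nB+1) 1 with h | h
          · rw [hπ, if_neg (by omega), mul_zero]
          · have hB0 : nB = 0 := by omega
            rw [hlam5, hB0]
            push_cast
            ring
        rw [z1, z2, z3, z4, hz, h5']
        ring
      · rcases lt_or_ge nC 0 with hC | hC
        · have z2 : π nA nB (nC-1) = 0 := by rw [hπ, if_neg (by omega)]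
          have z3 : π (nA-1) nB nC = 0 := by rw [hπ, if_neg (by omega)]
          have z4 : π (nA+1) (nB-1) nC = 0 := by rw [hπ, if_neg (by omega)]
          have z5 : π nA (nB+1) (nC-1) = 0 := by rw [hπ, if_neg (by omega)]
          have h1' : lam1 nA nB (nC+1) * π nA nB (nC+1) = 0 := by
            rcases lt_or_ge (nC+1) 0 with h | h
            · rw [hπ, if_neg (by omega), mul_zero]
            · have hC1 : nC + 1 = 0 := by omega
              rw [hlam1, hC1]
              push_cast
              ring
          rw [z2, z3, z4, z5, hz, h1']
          ring
        · exact absurd ⟨hA, hB, hC⟩ hmain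
end
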